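/- For every language L: there exists an advice A such that L is terminating regular with advice A if and only if there exists an advice B such that L is nonterminating regular with advice B. -/
import Mathlib


open Classical

/-- The run of a (terminating) automaton with advice. -/
def advRun {Q S Γ : Type*} (δ : Q → Γ → S → Q) (A : ℕ → Γ) : Q → ℕ → List S → Q
  | q, _, [] => q
  | q, n, a :: w => advRun δ A (δ q (A n) a) (n + 1) w

/-- The language accepted by a terminating automaton with advice. -/
def advAccepts {Q S Γ : Type*} (δ : Q → Γ → S → Q) (A : ℕ → Γ) (q0 : Q) (F : Set Q) :
    Set (List S) :=
  {w | advRun δ A q0 0 w ∈ F}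

/-- The infinite run of a nonterminating automaton with advice on a finite word
`w`: after `w` ends, the automaton reads blanks (`none`) with the advice. -/
def ntRun {Q S Γ : Type*} (δ : Q → Γ → Option S → Q) (A : ℕ → Γ) (q0 : Q)
    (w : List S) : ℕ → Q
  | 0 => q0
  | n + 1 => δ (ntRun δ A q0 w n) (A n) w[n]?

/-- The language accepted by a nonterminating automaton with advice, via the
Muller condition `F ⊆ P(Q)` on the set of infinitely visited states. -/
def ntAccepts {Q S Γ : Type*} (δ : Q → Γ → Option S → Q) (A : ℕ → Γ) (q0 : Q)
    (F : Set (Set Q)) : Set (List S) :=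
  {w | {q | {n | ntRun δ A q0 w n = q}.Infinite} ∈ F}

/-- `L` is terminating regular with advice `A`. -/
def TermRegWith {S Γ : Type*} (A : ℕ → Γ) (L : Set (List S)) : Prop :=
  ∃ (Q : Type) (_ : Fintype Q) (δ : Q → Γ → S → Q) (q0 : Q) (F : Set Q),
    advAccepts δ A q0 F = L

/-- `L` is nonterminating regular with advice `A`. -/
def NontermRegWith {S Γ : Type*} (A : ℕ → Γ) (L : Set (List S)) : Prop :=
  ∃ (Q : Type) (_ : Fintype Q) (δ : Q → Γ → Option S → Q) (q0 : Q) (F : Set (Set Q)),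
    ntAccepts δ A q0 F = L

section Aux

variable {Q S Γ : Type*}

lemma advRun_append (δ : Q → Γ → S → Q) (A : ℕ → Γ) (q : Q) (n : ℕ) (u v : List S) :
    advRun δ A q n (u ++ v) = advRun δ A (advRun δ A q n u) (n + u.length) v := by
  induction u generalizing q n with
  | nil => simp [advRun]
  | cons a t ih =>
    simp only [List.cons_append, advRun, List.length_cons]
    show advRun δ A (δ q (A n) a) (n + 1) (t ++ v)
      = advRun δ A (advRun δ A (δ q (A n) a) (n + 1) t) (n + (t.length + 1)) v
    rw [ih]
    have h : n + 1 + t.length = n + (t.length + 1) := by omega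
    rw [h]

lemma ntRun_eq_advRun (δ : Q → Γ → Option S → Q) (A : ℕ → Γ) (q0 : Q) (w : List S)
    {n : ℕ} (hn : n ≤ w.length) :
    ntRun δ A q0 w n = advRun (fun q γ s => δ q γ (some s)) A q0 0 (w.take n) := by
  induction n with
  | zero => simp [ntRun, advRun]
  | succ n ih =>
    have hn' : n < w.length := hn
    have h1 : w.take (n + 1) = w.take n ++ [w[n]] := by
      rw [List.take_succ, List.getElem?_eq_getElem hn']
      rfl
    rw [h1, advRun_append]
    have hlen : (w.take n).length = n := by
      simp [List.length_take]; omega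
    rw [hlen, ← ih (le_of_lt hn')]
    simp only [ntRun, advRun, List.getElem?_eq_getElem hn', Nat.zero_add]

lemma ntRun_tail (δ : Q → Γ → Option S → Q) (A : ℕ → Γ) (q0 : Q) (w : List S) (m : ℕ) :
    ntRun δ A q0 w (w.length + m) =
      ntRun δ (fun i => A (w.length + i)) (ntRun δ A q0 w w.length) ([] : List S) m := by
  induction m with
  | zero => simp [ntRun]
  | succ m ih =>
    rw [← Nat.add_assoc]
    simp only [ntRun, ih]
    congr 1
    rw [List.getElem?_eq_none (by omega), List.getElem?_eq_none (by simp)]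

lemma infinite_shift_iff (u : ℕ → Q) (k : ℕ) (q : Q) :
    {n | u (k + n) = q}.Infinite ↔ {n | u n = q}.Infinite := by
  constructor
  · intro h
    have himg := h.image (Set.injOn_of_injective (add_right_injective k))
    refine himg.mono ?_
    rintro m ⟨n, hn, rfl⟩
    exact hn
  · intro h
    have h2 : ({n | u n = q} \ Set.Iio k).Infinite := h.diff (Set.finite_Iio k)
    have h3 : ({n | u n = q} \ Set.Iio k) ⊆ (fun n => k + n) '' {n | u (k + n) = q} := by
      rintro n ⟨hn, hk⟩
      have hkn : k ≤ n := not_lt.1 hk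
      exact ⟨n - k, by simpa [Nat.add_sub_cancel' hkn] using hn, by
        show k + (n - k) = n; omega⟩
    exact Set.Infinite.of_image _ (h2.mono h3)

lemma ntRun_nil_elim (δ : Q → Γ → S → Q) (A : ℕ → Γ) (q : Q) (m : ℕ) :
    ntRun (fun q γ o => o.elim q (δ q γ)) A q ([] : List S) m = q := by
  induction m with
  | zero => rfl
  | succ m ih => simp [ntRun, ih]

/-- The nonterminating automaton started in state `q` at position `n` of the
advice accepts the empty word. -/
def ntAcc (δ : Q → Γ → Option S → Q) (A : ℕ → Γ) (F : Set (Set Q)) (q : Q) (n : ℕ) : Prop :=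
  {p | {m | ntRun δ (fun i => A (n + i)) q ([] : List S) m = p}.Infinite} ∈ F

/-- Product automaton tracking acceptance of the remaining blank run. -/
def prodδ (δ : Q → Γ → Option S → Q) :
    (Q × Prop) → (Γ × (Q → Prop)) → S → (Q × Prop) :=
  fun p g s => (δ p.1 g.1 (some s), g.2 (δ p.1 g.1 (some s)))

/-- Enriched advice: the original advice together with the set of states from
which the blank continuation is accepting. -/
def prodAdv (δ : Q → Γ → Option S → Q) (A : ℕ → Γ) (F : Set (Set Q)) :
    ℕ → Γ × (Q → Prop) :=
  fun n => (A n, fun q => ntAcc δ A F q (n + 1))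

lemma prod_run (δ : Q → Γ → Option S → Q) (A : ℕ → Γ) (F : Set (Set Q)) :
    ∀ (w : List S) (q : Q) (n : ℕ),
      advRun (prodδ δ) (prodAdv δ A F) (q, ntAcc δ A F q n) n w
        = (advRun (fun q γ s => δ q γ (some s)) A q n w,
           ntAcc δ A F (advRun (fun q γ s => δ q γ (some s)) A q n w) (n + w.length)) := by
  intro w
  induction w with
  | nil => intro q n; simp [advRun]
  | cons a t ih =>
    intro q n
    have hstep : prodδ δ (q, ntAcc δ A F q n) (prodAdv δ A F n) a
        = (δ q (A n) (some a), ntAcc δ A F (δ q (A n) (some a)) (n + 1)) := rfl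
    simp only [advRun, hstep, ih, List.length_cons]
    congr 2 <;> omega

end Aux

/-- The terminating and nonterminating models are equivalent when the advice is
not fixed. -/
theorem termReg_iff_nontermReg {S : Type*} (L : Set (List S)) :
    (∃ (Γ : Type) (_ : Fintype Γ) (A : ℕ → Γ), TermRegWith A L) ↔
      (∃ (Γ : Type) (_ : Fintype Γ) (B : ℕ → Γ), NontermRegWith B L) := by
  constructor
  · rintro ⟨Γ, hΓ, A, Q, hQ, δ, q0, F, hF⟩
    refine ⟨Γ, hΓ, A, Q, hQ, fun q γ o => o.elim q (δ q γ), q0,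
      {t | ∃ q ∈ F, t = {q}}, ?_⟩
    rw [← hF]
    ext w
    set q' := advRun δ A q0 0 w with hq'
    have hrun : ∀ m : ℕ, ntRun (fun q γ o => o.elim q (δ q γ)) A q0 w (w.length + m) = q' := by
      intro m
      rw [ntRun_tail, ntRun_nil_elim,
        ntRun_eq_advRun (fun q γ o => o.elim q (δ q γ)) A q0 w (le_refl _),
        List.take_length]
      rfl
    have hset : {q | {n | ntRun (fun q γ o => o.elim q (δ q γ)) A q0 w n = q}.Infinite}
        = {q'} := by
      ext p
      simp only [Set.mem_setOf_eq, Set.mem_singleton_iff]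
      constructor
      · intro hp
        by_contra hne
        refine hp ?_
        apply Set.Finite.subset (Set.finite_Iio w.length)
        intro n hn
        by_contra hlt
        have : w.length ≤ n := by simpa using hlt
        obtain ⟨m, rfl⟩ := Nat.exists_eq_add_of_le this
        exact hne ((hrun m ▸ hn : q' = p).symm ▸ rfl)
      · rintro rfl
        refine Set.Infinite.mono ?_ ((Set.Ici_infinite w.length).image
          (Set.injOn_of_injective (fun a b h => h)))
        rintro n ⟨m, hm, rfl⟩
        obtain ⟨k, rfl⟩ := Nat.exists_eq_add_of_le hm
        exact hrun k
    simp only [ntAccepts, advAccepts, Set.mem_setOf_eq, hset]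
    constructor
    · rintro ⟨p, hp, hpq⟩
      show q' ∈ F
      rw [Set.singleton_eq_singleton_iff.1 hpq]
      exact hp
    · intro h
      exact ⟨q', h, rfl⟩
  · rintro ⟨Γ, hΓ, B, Q, hQ, δ, q0, F, hF⟩
    haveI := hΓ; haveI := hQ
    refine ⟨Γ × (Q → Prop), inferInstance, prodAdv δ B F, Q × Prop, inferInstance,
      prodδ δ, (q0, ntAcc δ B F q0 0), {p | p.2}, ?_⟩
    rw [← hF]
    ext w
    have h1 := prod_run δ B F w q0 0
    simp only [advAccepts, ntAccepts, Set.mem_setOf_eq, h1, Nat.zero_add]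
    have hq' : ntRun δ B q0 w w.length
        = advRun (fun q γ s => δ q γ (some s)) B q0 0 w := by
      rw [ntRun_eq_advRun δ B q0 w (le_refl _), List.take_length]
    have hsets : {p | {m | ntRun δ (fun i => B (w.length + i))
          (advRun (fun q γ s => δ q γ (some s)) B q0 0 w) ([] : List S) m = p}.Infinite}
        = {p | {n | ntRun δ B q0 w n = p}.Infinite} := by
      ext p
      simp only [Set.mem_setOf_eq]
      rw [← hq']
      have heq : ∀ m, ntRun δ (fun i => B (w.length + i)) (ntRun δ B q0 w w.length)
          ([] : List S) m = ntRun δ B q0 w (w.length + m) := fun m => (ntRun_tail δ B q0 w m).symm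
      rw [show {m | ntRun δ (fun i => B (w.length + i)) (ntRun δ B q0 w w.length)
          ([] : List S) m = p} = {m | ntRun δ B q0 w (w.length + m) = p} by
        ext m; rw [Set.mem_setOf_eq, Set.mem_setOf_eq, heq m]]
      exact infinite_shift_iff (ntRun δ B q0 w) w.length p
    show ntAcc δ B F _ _ ↔ _
    unfold ntAcc
    rw [hsets]
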